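/- For λ_1, λ_2 ∈ [λ_*, λ^*] with λ_* > 0, sup over x ≥ 1 and y ≥ 0 of ∫_0^{min(y/x,1)} |α_{λ_1}(x)β_{λ_1}(y,u) - α_{λ_2}(x)β_{λ_2}(y,u)| du is at most (4 e^{-1}/λ_*²) |λ_1 - λ_2|. -/

import Mathlib

lemma aux_log (x : ℝ) (hx : 0 < x) : Real.log x ≤ x * Real.exp (-1) := by
  have h1 : Real.log (x * Real.exp (-1)) ≤ x * Real.exp (-1) - 1 :=
    Real.log_le_sub_one_of_pos (by positivity)
  rw [Real.log_mul (ne_of_gt hx) (by positivity), Real.log_exp] at h1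
  linarith

lemma aux_tk (k t : ℝ) (hk : 0 < k) (ht : 0 < t) : t ^ k * (-Real.log t) ≤ Real.exp (-1) / k := by
  have h1 : Real.log (t ^ (-k)) ≤ t ^ (-k) * Real.exp (-1) := aux_log _ (Real.rpow_pos_of_pos ht _)
  rw [Real.log_rpow ht] at h1
  have h2 : t ^ k * t ^ (-k) = 1 := by
    rw [← Real.rpow_add ht]; simp
  have h3 : (0:ℝ) < t ^ k := Real.rpow_pos_of_pos ht _
  have h4 : t ^ k * (-k * Real.log t) ≤ t ^ k * (t ^ (-k) * Real.exp (-1)) :=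
    mul_le_mul_of_nonneg_left h1 (le_of_lt h3)
  rw [div_eq_inv_mul]
  calc t ^ k * (-Real.log t) = (t ^ k * (-k * Real.log t)) / k := by field_simp
    _ ≤ (t ^ k * (t ^ (-k) * Real.exp (-1))) / k := by
        apply div_le_div_of_nonneg_right h4 (le_of_lt hk)
    _ = k⁻¹ * Real.exp (-1) := by rw [show t ^ k * (t ^ (-k) * Real.exp (-1)) = (t^k * t^(-k)) * Real.exp (-1) by ring, h2]; ring

lemma lemA' (m p q t : ℝ) (hm : 0 < m) (hp : m ≤ p) (hpq : p ≤ q) (ht0 : 0 < t) (ht1 : t ≤ 1) :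
    t ^ p - t ^ q ≤ 2 * Real.exp (-1) / m * (q - p) * t ^ (m / 2) := by
  have hlt : Real.log t ≤ 0 := Real.log_nonpos (le_of_lt ht0) ht1
  have h1 : t ^ p - t ^ q = t ^ p * (1 - t ^ (q - p)) := by
    rw [mul_sub, mul_one, ← Real.rpow_add ht0]; ring_nf
  have h2 : 1 - t ^ (q - p) ≤ (q - p) * (-Real.log t) := by
    have h := Real.add_one_le_exp (Real.log t * (q - p))
    rw [Real.rpow_def_of_pos ht0]
    nlinarith
  have hpm : t ^ p ≤ t ^ m := Real.rpow_le_rpow_of_exponent_ge ht0 ht1 hp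
  have h3 : t ^ m = t ^ (m/2) * t ^ (m/2) := by rw [← Real.rpow_add ht0]; ring_nf
  have h4 : t ^ (m/2) * (-Real.log t) ≤ Real.exp (-1) / (m/2) := aux_tk _ _ (by linarith) ht0
  have htp : (0:ℝ) < t ^ p := Real.rpow_pos_of_pos ht0 _
  have htm2 : (0:ℝ) < t ^ (m/2) := Real.rpow_pos_of_pos ht0 _
  have h5 : t ^ p - t ^ q ≤ t ^ p * ((q - p) * (-Real.log t)) := by
    rw [h1]; exact mul_le_mul_of_nonneg_left h2 (le_of_lt htp)
  have h6 : t ^ p * ((q - p) * (-Real.log t)) ≤ t ^ m * ((q - p) * (-Real.log t)) := by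
    apply mul_le_mul_of_nonneg_right hpm; nlinarith
  have h7 : t ^ m * ((q - p) * (-Real.log t)) = (q - p) * (t ^ (m/2) * (-Real.log t)) * t ^ (m/2) := by
    rw [h3]; ring
  have h8 : (q - p) * (t ^ (m/2) * (-Real.log t)) * t ^ (m/2) ≤ (q - p) * (Real.exp (-1) / (m/2)) * t ^ (m/2) := by
    apply mul_le_mul_of_nonneg_right _ (le_of_lt htm2)
    apply mul_le_mul_of_nonneg_left h4; linarith
  have h9 : (q - p) * (Real.exp (-1) / (m/2)) * t ^ (m/2) = 2 * Real.exp (-1) / m * (q - p) * t ^ (m/2) := by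
    rw [div_div_eq_mul_div]; ring
  linarith

lemma lemA (m p q t : ℝ) (hm : 0 < m) (hp : m ≤ p) (hq : m ≤ q) (ht0 : 0 ≤ t) (ht1 : t ≤ 1) :
    |t ^ p - t ^ q| ≤ 2 * Real.exp (-1) / m * |p - q| * t ^ (m / 2) := by
  rcases eq_or_lt_of_le ht0 with h0 | h0
  · rw [← h0, Real.zero_rpow (by positivity : m/2 ≠ 0), Real.zero_rpow (by linarith : p ≠ 0),
      Real.zero_rpow (by linarith : q ≠ 0)]
    simp
  rcases le_total p q with hpq | hpq
  · have := lemA' m p q t hm hp hpq h0 ht1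
    have h2 : t ^ q ≤ t ^ p := Real.rpow_le_rpow_of_exponent_ge h0 ht1 hpq
    rw [abs_of_nonneg (by linarith), abs_of_nonpos (by linarith)]
    have e : 2 * Real.exp (-1) / m * -(p - q) * t ^ (m / 2)
        = 2 * Real.exp (-1) / m * (q - p) * t ^ (m / 2) := by ring
    rw [e]; exact this
  · have := lemA' m q p t hm hq hpq h0 ht1
    have h2 : t ^ p ≤ t ^ q := Real.rpow_le_rpow_of_exponent_ge h0 ht1 hpq
    rw [abs_of_nonpos (by linarith), abs_of_nonneg (by linarith)]
    linarith

set_option maxHeartbeats 1000000 in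
theorem stmt_7 (r lamStar lamSup : ℝ) (hr : 0 < r) (hls : 0 < lamStar) (hle : lamStar ≤ lamSup)
    (lam1 lam2 : ℝ) (h11 : lamStar ≤ lam1) (h12 : lam1 ≤ lamSup)
    (h21 : lamStar ≤ lam2) (h22 : lam2 ≤ lamSup)
    (x y : ℝ) (hx : 1 ≤ x) (hy : 0 ≤ y) :
    (∫ u in (0:ℝ)..(min (y / x) 1),
        |((x - 1) ^ (lam1 / r) / r) * (u ^ (lam1 / r) * (y - u) ^ (-(lam1 / r) - 1)) -
          ((x - 1) ^ (lam2 / r) / r) * (u ^ (lam2 / r) * (y - u) ^ (-(lam2 / r) - 1))|)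
      ≤ (4 * Real.exp (-1) / lamStar ^ 2) * |lam1 - lam2| := by
  have hRHS0 : (0:ℝ) ≤ 4 * Real.exp (-1) / lamStar ^ 2 * |lam1 - lam2| := by positivity
  have hA : 0 < lam1 / r := div_pos (by linarith) hr
  have hB : 0 < lam2 / r := div_pos (by linarith) hr
  rcases eq_or_lt_of_le hx with hx1 | hx1
  · -- x = 1 : integrand is identically zero
    have hz : ∀ u : ℝ,
        |((x - 1) ^ (lam1 / r) / r) * (u ^ (lam1 / r) * (y - u) ^ (-(lam1 / r) - 1)) -
          ((x - 1) ^ (lam2 / r) / r) * (u ^ (lam2 / r) * (y - u) ^ (-(lam2 / r) - 1))| = 0 := by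
      intro u
      rw [← hx1, show ((1:ℝ) - 1) = 0 by norm_num, Real.zero_rpow (ne_of_gt hA),
        Real.zero_rpow (ne_of_gt hB)]
      simp
    simp only [hz]
    rw [intervalIntegral.integral_zero]
    exact hRHS0
  rcases eq_or_lt_of_le hy with hy0 | hy0
  · -- y = 0
    rw [← hy0, zero_div, min_eq_left zero_le_one, intervalIntegral.integral_same]
    exact hRHS0
  -- main case : 1 < x, 0 < y
  have hx0 : (0:ℝ) < x := by linarith
  set A := lam1 / r with hA_def
  set B := lam2 / r with hB_def
  set m := lamStar / r with hm_def
  have hm : 0 < m := div_pos hls hr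
  have hmA : m ≤ A := by rw [hA_def, hm_def]; gcongr
  have hmB : m ≤ B := by rw [hB_def, hm_def]; gcongr
  set c := m / 2 with hc_def
  have hc : 0 < c := by rw [hc_def]; linarith
  set T := min (y / x) 1 with hT_def
  have hTyx : T ≤ y / x := min_le_left _ _
  have hT0 : 0 ≤ T := le_min (by positivity) zero_le_one
  have hxT : T * x ≤ y := (le_div_iff₀ hx0).mp hTyx
  have hyT : 0 < y - T := by
    have h1 : y / x < y := by rw [div_lt_iff₀ hx0]; nlinarith
    linarith
  have hK0 : (0:ℝ) ≤ 2 * Real.exp (-1) / m * |A - B| * (x - 1) ^ c * y / r :=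
    div_nonneg (mul_nonneg (mul_nonneg (mul_nonneg
      (le_of_lt (div_pos (by positivity) hm)) (abs_nonneg _))
      (Real.rpow_nonneg (by linarith) _)) hy) hr.le
  -- pointwise bound
  have hpt : ∀ u ∈ Set.Icc (0:ℝ) T,
      |(x - 1) ^ A / r * (u ^ A * (y - u) ^ (-A - 1)) -
        (x - 1) ^ B / r * (u ^ B * (y - u) ^ (-B - 1))| ≤
      2 * Real.exp (-1) / m * |A - B| * (x - 1) ^ c * y / r *
        (u ^ (c - 1) * (y - u) ^ (-c - 1)) := by
    intro u hu
    obtain ⟨hu0, huT⟩ := hu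
    have hyu : 0 < y - u := by linarith
    rcases eq_or_lt_of_le hu0 with h0 | h0
    · rw [← h0, Real.zero_rpow (ne_of_gt hA), Real.zero_rpow (ne_of_gt hB)]
      simp only [mul_zero, zero_mul, sub_zero, abs_zero]
      exact mul_nonneg hK0 (mul_nonneg (Real.rpow_nonneg le_rfl _)
        (Real.rpow_nonneg (by linarith) _))
    · set t := (x - 1) * u / (y - u) with ht_def
      have ht0 : 0 ≤ t := div_nonneg (mul_nonneg (by linarith) h0.le) hyu.le
      have ht1 : t ≤ 1 := by
        rw [ht_def, div_le_one hyu]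
        have : u * x ≤ T * x := mul_le_mul_of_nonneg_right huT hx0.le
        nlinarith
      have hyup : ∀ p : ℝ, ((y - u):ℝ) ^ p ≠ 0 := fun p => ne_of_gt (Real.rpow_pos_of_pos hyu _)
      have key : ∀ p : ℝ, (x - 1) ^ p / r * (u ^ p * (y - u) ^ (-p - 1)) =
          t ^ p * ((y - u)⁻¹ / r) := by
        intro p
        have e2 : ((y - u):ℝ) ^ (-p - 1) = (((y - u):ℝ) ^ p)⁻¹ * (y - u)⁻¹ := by
          rw [show -p - 1 = -p + (-1) by ring, Real.rpow_add hyu, Real.rpow_neg hyu.le,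
            Real.rpow_neg_one]
        have e3 : t ^ p = (x - 1) ^ p * u ^ p / (y - u) ^ p := by
          rw [ht_def, Real.div_rpow (mul_nonneg (by linarith) h0.le) hyu.le,
            Real.mul_rpow (by linarith) h0.le]
        rw [e2, e3]
        ring
      rw [key A, key B, ← sub_mul, abs_mul,
        abs_of_nonneg (by positivity : (0:ℝ) ≤ (y - u)⁻¹ / r)]
      have hlem := lemA m A B t hm hmA hmB ht0 ht1
      have step1 : |t ^ A - t ^ B| * ((y - u)⁻¹ / r) ≤
          2 * Real.exp (-1) / m * |A - B| * t ^ c * ((y - u)⁻¹ / r) := by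
        apply mul_le_mul_of_nonneg_right _ (by positivity)
        exact hlem
      refine le_trans step1 ?_
      -- now compare 2e/m*|A-B|*t^c*((y-u)⁻¹/r)  ≤  K * (u^(c-1) * (y-u)^(-c-1))
      have e3c : t ^ c = (x - 1) ^ c * u ^ c / (y - u) ^ c := by
        rw [ht_def, Real.div_rpow (mul_nonneg (by linarith) h0.le) hyu.le,
          Real.mul_rpow (by linarith) h0.le]
      have euc : u ^ c = u ^ (c - 1) * u := by
        rw [show c = (c - 1) + 1 by ring, Real.rpow_add h0, Real.rpow_one]
        ring_nf
      have e2c : ((y - u):ℝ) ^ (-c - 1) = (((y - u):ℝ) ^ c)⁻¹ * (y - u)⁻¹ := by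
        rw [show -c - 1 = -c + (-1) by ring, Real.rpow_add hyu, Real.rpow_neg hyu.le,
          Real.rpow_neg_one]
      have common_nonneg : (0:ℝ) ≤ 2 * Real.exp (-1) / m * |A - B| * (x - 1) ^ c *
          (u ^ (c - 1) * (((y - u) ^ c)⁻¹ * (y - u)⁻¹)) / r :=
        div_nonneg (mul_nonneg (mul_nonneg (mul_nonneg
          (le_of_lt (div_pos (by positivity) hm)) (abs_nonneg _))
          (Real.rpow_nonneg (by linarith) _))
          (mul_nonneg (Real.rpow_nonneg h0.le _)
            (mul_nonneg (inv_nonneg.mpr (Real.rpow_nonneg hyu.le _)) (inv_nonneg.mpr hyu.le))))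
          hr.le
      have eL : 2 * Real.exp (-1) / m * |A - B| * t ^ c * ((y - u)⁻¹ / r) =
          2 * Real.exp (-1) / m * |A - B| * (x - 1) ^ c *
            (u ^ (c - 1) * (((y - u) ^ c)⁻¹ * (y - u)⁻¹)) / r * u := by
        rw [e3c, euc]
        ring
      have eR : 2 * Real.exp (-1) / m * |A - B| * (x - 1) ^ c * y / r *
          (u ^ (c - 1) * (y - u) ^ (-c - 1)) =
          2 * Real.exp (-1) / m * |A - B| * (x - 1) ^ c *
            (u ^ (c - 1) * (((y - u) ^ c)⁻¹ * (y - u)⁻¹)) / r * y := by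
        rw [e2c]; ring
      rw [eL, eR]
      exact mul_le_mul_of_nonneg_left (by linarith : u ≤ y) common_nonneg
  -- continuity / integrability of the integrand
  have hicc : Set.uIcc (0:ℝ) T = Set.Icc 0 T := Set.uIcc_of_le hT0
  have hyu_ne : ∀ u ∈ Set.Icc (0:ℝ) T, y - u ≠ 0 := by
    intro u hu; have := hu.2; intro h; nlinarith [hyT]
  have hcont_pow : ∀ p : ℝ, 0 < p → ContinuousOn
      (fun u : ℝ => (x - 1) ^ p / r * (u ^ p * (y - u) ^ (-p - 1))) (Set.Icc (0:ℝ) T) := by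
    intro p hp
    apply ContinuousOn.mul continuousOn_const
    apply ContinuousOn.mul
    · exact continuousOn_id.rpow_const (fun u _ => Or.inr hp.le)
    · exact (continuous_const.sub continuous_id).continuousOn.rpow_const
        (fun u hu => Or.inl (hyu_ne u hu))
  have hint_f : IntervalIntegrable
      (fun u => |(x - 1) ^ A / r * (u ^ A * (y - u) ^ (-A - 1)) -
        (x - 1) ^ B / r * (u ^ B * (y - u) ^ (-B - 1))|) MeasureTheory.volume 0 T := by
    apply ContinuousOn.intervalIntegrable
    rw [hicc]
    exact (((hcont_pow A hA).sub (hcont_pow B hB)).abs)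
  have hcont_yu : ContinuousOn (fun u : ℝ => (y - u) ^ (-c - 1)) (Set.uIcc (0:ℝ) T) := by
    rw [hicc]
    exact (continuous_const.sub continuous_id).continuousOn.rpow_const
      (fun u hu => Or.inl (hyu_ne u hu))
  have hint_base : IntervalIntegrable (fun u : ℝ => u ^ (c - 1) * (y - u) ^ (-c - 1))
      MeasureTheory.volume 0 T :=
    (intervalIntegral.intervalIntegrable_rpow' (by linarith)).mul_continuousOn hcont_yu
  have hint_g : IntervalIntegrable
      (fun u => 2 * Real.exp (-1) / m * |A - B| * (x - 1) ^ c * y / r *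
        (u ^ (c - 1) * (y - u) ^ (-c - 1))) MeasureTheory.volume 0 T :=
    hint_base.const_mul _
  have hmono := intervalIntegral.integral_mono_on hT0 hint_f hint_g hpt
  -- FTC for G u = (u/(y-u))^c
  have hderiv : ∀ u ∈ Set.Ioo (0:ℝ) T,
      HasDerivWithinAt (fun u : ℝ => (u / (y - u)) ^ c)
        (c * y * (u ^ (c - 1) * (y - u) ^ (-c - 1))) (Set.Ioi u) u := by
    intro u hu
    obtain ⟨h0, huT⟩ := hu
    have hyu : 0 < y - u := by linarith
    have hq : HasDerivAt (fun u : ℝ => u / (y - u)) (y / (y - u) ^ 2) u := by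
      have h := (hasDerivAt_id u).div ((hasDerivAt_id u).const_sub y) (ne_of_gt hyu)
      convert h using 1
      · rfl
      · rfl
      · rfl
      · simp only [id]; ring
    have hqpos : 0 < u / (y - u) := div_pos h0 hyu
    have hd := hq.rpow_const (p := c) (Or.inl (ne_of_gt hqpos))
    have h2r : ((y - u):ℝ) ^ (2:ℕ) = (y - u) ^ (2:ℝ) := by
      rw [← Real.rpow_natCast (y - u) 2]; norm_num
    have e2 : ((y - u):ℝ) ^ (-c - 1) = (((y - u):ℝ) ^ (c - 1) * (y - u) ^ (2:ℕ))⁻¹ := by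
      rw [show -c - 1 = -((c - 1) + 2) by ring, Real.rpow_neg hyu.le, Real.rpow_add hyu, h2r]
    have hval : c * y * (u ^ (c - 1) * (y - u) ^ (-c - 1)) =
        y / (y - u) ^ 2 * c * (u / (y - u)) ^ (c - 1) := by
      rw [Real.div_rpow h0.le hyu.le, e2]
      have h1 : ((y - u):ℝ) ^ (c - 1) ≠ 0 := ne_of_gt (Real.rpow_pos_of_pos hyu _)
      field_simp
    rw [hval]
    exact hd.hasDerivWithinAt
  have hcontG : ContinuousOn (fun u : ℝ => (u / (y - u)) ^ c) (Set.Icc 0 T) := by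
    apply ContinuousOn.rpow_const
    · exact continuousOn_id.div (continuous_const.sub continuous_id).continuousOn hyu_ne
    · intro u hu; exact Or.inr hc.le
  have hint_D : IntervalIntegrable (fun u : ℝ => c * y * (u ^ (c - 1) * (y - u) ^ (-c - 1)))
      MeasureTheory.volume 0 T := hint_base.const_mul _
  have hFTC := intervalIntegral.integral_eq_sub_of_hasDeriv_right_of_le hT0 hcontG hderiv hint_D
  -- compute the integral of the comparison function
  have hG0 : ((0:ℝ) / (y - 0)) ^ c = 0 := by
    rw [zero_div, Real.zero_rpow (ne_of_gt hc)]
  have hcy : (c:ℝ) * y ≠ 0 := ne_of_gt (mul_pos hc hy0)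
  have hint_val : (∫ u in (0:ℝ)..T, u ^ (c - 1) * (y - u) ^ (-c - 1)) =
      (T / (y - T)) ^ c / (c * y) := by
    have h1 : (∫ u in (0:ℝ)..T, c * y * (u ^ (c - 1) * (y - u) ^ (-c - 1))) =
        c * y * ∫ u in (0:ℝ)..T, u ^ (c - 1) * (y - u) ^ (-c - 1) :=
      intervalIntegral.integral_const_mul _ _
    rw [h1, hG0, sub_zero] at hFTC
    rw [eq_div_iff hcy]
    linear_combination hFTC
  have hint_val2 : (∫ u in (0:ℝ)..T,
      2 * Real.exp (-1) / m * |A - B| * (x - 1) ^ c * y / r *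
        (u ^ (c - 1) * (y - u) ^ (-c - 1))) =
      2 * Real.exp (-1) / m * |A - B| * (x - 1) ^ c * y / r * ((T / (y - T)) ^ c / (c * y)) := by
    rw [intervalIntegral.integral_const_mul, hint_val]
  -- final arithmetic
  have hbase0 : (0:ℝ) ≤ (x - 1) * (T / (y - T)) :=
    mul_nonneg (by linarith) (div_nonneg hT0 hyT.le)
  have hbase1 : (x - 1) * (T / (y - T)) ≤ 1 := by
    rw [mul_div_assoc', div_le_one hyT]
    nlinarith [hxT]
  have e4 : ((x - 1) * (T / (y - T))) ^ c ≤ 1 := Real.rpow_le_one hbase0 hbase1 hc.le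
  have e3 : 2 * Real.exp (-1) / m * |A - B| * (x - 1) ^ c * y / r * ((T / (y - T)) ^ c / (c * y)) =
      2 * Real.exp (-1) / m * |A - B| / (r * c) * ((x - 1) * (T / (y - T))) ^ c := by
    rw [Real.mul_rpow (by linarith) (div_nonneg hT0 hyT.le)]
    field_simp
  have hcoef0 : (0:ℝ) ≤ 2 * Real.exp (-1) / m * |A - B| / (r * c) :=
    div_nonneg (mul_nonneg (le_of_lt (div_pos (by positivity) hm)) (abs_nonneg _))
      (mul_nonneg hr.le hc.le)
  have e5 : 2 * Real.exp (-1) / m * |A - B| / (r * c) =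
      4 * Real.exp (-1) / lamStar ^ 2 * |lam1 - lam2| := by
    rw [hA_def, hB_def, hm_def, hc_def, hm_def, div_sub_div_same, abs_div, abs_of_pos hr]
    field_simp
    ring
  calc (∫ u in (0:ℝ)..T,
        |(x - 1) ^ A / r * (u ^ A * (y - u) ^ (-A - 1)) -
          (x - 1) ^ B / r * (u ^ B * (y - u) ^ (-B - 1))|)
      ≤ ∫ u in (0:ℝ)..T, 2 * Real.exp (-1) / m * |A - B| * (x - 1) ^ c * y / r *
          (u ^ (c - 1) * (y - u) ^ (-c - 1)) := hmono
    _ = 2 * Real.exp (-1) / m * |A - B| / (r * c) * ((x - 1) * (T / (y - T))) ^ c := by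
        rw [hint_val2, e3]
    _ ≤ 2 * Real.exp (-1) / m * |A - B| / (r * c) * 1 :=
        mul_le_mul_of_nonneg_left e4 hcoef0
    _ = 4 * Real.exp (-1) / lamStar ^ 2 * |lam1 - lam2| := by rw [mul_one, e5]
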